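/- Let V be the free k-module on v₊, v₋ with multiplication m and comultiplication Δ as above. Then the Frobenius relation holds: Δ ∘ m = (m ⊗ id) ∘ (id ⊗ Δ) = (id ⊗ m) ∘ (Δ ⊗ id) as maps V ⊗ V → V ⊗ V. -/

import Mathlib

open TensorProduct

noncomputable section

/-- The free `k`-module on generators `v₊, v₋`, realized as `k × k`. -/
abbrev V (k : Type*) [CommRing k] : Type _ := k × k

variable (k : Type*) [CommRing k]

/-- The generator `v₊`. -/
def vp : V k := (1, 0)

/-- The generator `v₋`. -/
def vm : V k := (0, 1)

/-- The Frobenius multiplication `m : V ⊗ V → V` with `m(v₊⊗v₊)=v₊`,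
`m(v₊⊗v₋)=m(v₋⊗v₊)=v₋`, `m(v₋⊗v₋)=0`. -/
def mV : V k ⊗[k] V k →ₗ[k] V k :=
  TensorProduct.lift (LinearMap.mk₂ k (fun x y => (x.1 * y.1, x.1 * y.2 + x.2 * y.1))
    (by intros; ext <;> simp only [Prod.fst_add, Prod.snd_add, Prod.smul_fst, Prod.smul_snd, smul_eq_mul] <;> ring)
    (by intros; ext <;> simp only [Prod.fst_add, Prod.snd_add, Prod.smul_fst, Prod.smul_snd, smul_eq_mul] <;> ring)
    (by intros; ext <;> simp only [Prod.fst_add, Prod.snd_add, Prod.smul_fst, Prod.smul_snd, smul_eq_mul] <;> ring)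
    (by intros; ext <;> simp only [Prod.fst_add, Prod.snd_add, Prod.smul_fst, Prod.smul_snd, smul_eq_mul] <;> ring))

/-- The Frobenius comultiplication `Δ : V → V ⊗ V`,
`Δ(v₊)=v₊⊗v₋+v₋⊗v₊`, `Δ(v₋)=v₋⊗v₋`. -/
def ΔV : V k →ₗ[k] V k ⊗[k] V k :=
  (LinearMap.fst k k k).smulRight (vp k ⊗ₜ vm k + vm k ⊗ₜ vp k) +
    (LinearMap.snd k k k).smulRight (vm k ⊗ₜ vm k)

/-- The unit `ε : k → V`, `1 ↦ v₊`. -/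
def εV : k →ₗ[k] V k := LinearMap.toSpanSingleton k (V k) (vp k)

/-- The counit `η : V → k`, `v₊ ↦ 0`, `v₋ ↦ 1`. -/
def ηV : V k →ₗ[k] k := LinearMap.snd k k k

/-- The free rank-one `k`-module `W = k{w}`, with `w = 1`. -/
abbrev W (k : Type*) [CommRing k] : Type _ := k

/-- The saddle map `s : W → W ⊗ V`, `w ↦ w ⊗ v₋`. -/
def sW : W k →ₗ[k] W k ⊗[k] V k :=
  LinearMap.toSpanSingleton k (W k ⊗[k] V k) ((1 : k) ⊗ₜ vm k)

/-- The saddle map `t : W ⊗ V → W`, `w⊗v₊ ↦ w`, `w⊗v₋ ↦ 0`. -/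
def tW : W k ⊗[k] V k →ₗ[k] W k :=
  TensorProduct.lift (LinearMap.mk₂ k (fun c x => c * x.1)
    (by intros; ring) (by intros; simp; ring)
    (by intros; simp; ring) (by intros; simp; ring))

/-- The map `Ψ : W → V` closing an arc into a circle, `w ↦ v₋`. -/
def ΨW : W k →ₗ[k] V k := LinearMap.toSpanSingleton k (V k) (vm k)

end

section Helpers
open TensorProduct
variable (k : Type*) [CommRing k]

lemma V_decomp (x : V k) : x = x.1 • vp k + x.2 • vm k := by
  simp [vp, vm, Prod.ext_iff]

@[simp] lemma mV_tmul (x y : V k) :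
    mV k (x ⊗ₜ y) = (x.1 * y.1, x.1 * y.2 + x.2 * y.1) := rfl

@[simp] lemma ΔV_apply (x : V k) :
    ΔV k x = x.1 • (vp k ⊗ₜ[k] vm k + vm k ⊗ₜ[k] vp k) + x.2 • (vm k ⊗ₜ[k] vm k) := rfl

end Helpers

/-- the Frobenius relation
`Δ ∘ m = (m ⊗ id) ∘ (id ⊗ Δ) = (id ⊗ m) ∘ (Δ ⊗ id)` as maps `V ⊗ V → V ⊗ V`. -/
theorem frobenius_relation (k : Type*) [CommRing k] :
    (ΔV k).comp (mV k) =
        (TensorProduct.map (mV k) LinearMap.id).comp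
          ((TensorProduct.assoc k (V k) (V k) (V k)).symm.toLinearMap.comp
            (TensorProduct.map LinearMap.id (ΔV k))) ∧
      (ΔV k).comp (mV k) =
        (TensorProduct.map LinearMap.id (mV k)).comp
          ((TensorProduct.assoc k (V k) (V k) (V k)).toLinearMap.comp
            (TensorProduct.map (ΔV k) LinearMap.id)) := by
  constructor <;>
  · apply TensorProduct.ext'
    intro x y
    rw [V_decomp k x, V_decomp k y]
    simp only [map_add, map_smul, TensorProduct.tmul_add, TensorProduct.add_tmul,
      TensorProduct.smul_tmul', TensorProduct.tmul_smul, LinearMap.comp_apply,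
      TensorProduct.map_tmul, LinearMap.id_coe, id_eq, LinearEquiv.coe_coe,
      TensorProduct.assoc_tmul, TensorProduct.assoc_symm_tmul, mV_tmul, ΔV_apply,
      vp, vm, smul_add, smul_smul]
    simp [vp, vm, Prod.ext_iff, TensorProduct.tmul_add, TensorProduct.add_tmul,
      TensorProduct.smul_tmul', smul_smul, Prod.mk_zero_zero, TensorProduct.zero_tmul, TensorProduct.tmul_zero]
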